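/- Let ρ > 0, ṽ > 0, γ > 0, d > 0, c₂ > 0, θ ∈ ℝ, ṽ' < 0 and sin θ ≠ 0. For each ξ > 0, let λ(ξ) be the eigenvalue of A_ξ = [[ṽ'·cos θ, −ṽ·sin θ], [−d·(ṽ'/ρ)·sin θ, −iγξ + c₂·(ṽ/ρ)·cos θ]] with Im λ(ξ) > 0 (the unstable mode). Then ξ·Im λ(ξ) converges, as ξ → ∞, to −d·ṽ·ṽ'·sin²θ / (γ·ρ), a strictly positive number. -/

import Mathlib

open Matrix Complex Filter

set_option maxHeartbeats 1600000 in
private lemma aux7 (A M B K u v : ℝ) (hK : 0 < K) (hv : 0 < v) (hB : B < 0)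
    (e1 : v^2 + K*v = (u-A)*(u-M) - B)
    (e2 : (A-u)*K = v*(2*u-A-M)) :
    -(K*v + B) * K^2 ≤ B^2 - B*(A-M)^2 ∧ K*v + B ≤ 0 := by
  have star : (u-M)*(v^2+(u-A)^2) = B*(u-A) := by
    linear_combination (-v)*e2 - (u-A)*e1
  have hb1 : (u-A)*(u-M) ≤ 0 := by
    rcases le_total A u with h|h
    · have hM : u ≤ M := by nlinarith [star, mul_pos hv hv, sq_nonneg (u-A), hB, h]
      nlinarith [mul_nonneg (sub_nonneg.2 h) (sub_nonneg.2 hM)]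
    · have hM : M ≤ u := by nlinarith [star, mul_pos hv hv, sq_nonneg (u-A), hB, h]
      nlinarith [mul_nonneg (sub_nonneg.2 hM) (sub_nonneg.2 h)]
  have hup : K*v + B ≤ 0 := by nlinarith [e1, hb1, sq_nonneg v]
  have hKv : 0 < K*v := mul_pos hK hv
  have hv2K : v^2*K^2 ≤ B^2 := by nlinarith [hup, hKv]
  have h4 : (2*u-A-M)^2 ≤ (A-M)^2 := by nlinarith [hb1]
  have huM : (u-M)^2 ≤ (A-M)^2 := by nlinarith [hb1]
  have hsq : (u-A)^2*K^2 = v^2*(2*u-A-M)^2 := by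
    linear_combination ((A-u)*K + v*(2*u-A-M))*e2
  have hA2 : (u-A)^2*K^2 ≤ v^2*(A-M)^2 := by
    rw [hsq]; exact mul_le_mul_of_nonneg_left h4 (sq_nonneg v)
  have t2 := mul_le_mul_of_nonneg_right (mul_le_mul_of_nonneg_right hA2 (sq_nonneg K)) (sq_nonneg (u-M))
  have t3 := mul_le_mul_of_nonneg_right huM (by positivity : (0:ℝ) ≤ v^2*(A-M)^2*K^2)
  have t4 := mul_le_mul_of_nonneg_right hv2K (by positivity : (0:ℝ) ≤ (A-M)^2*(A-M)^2)
  have hprod2 : ((u-A)*(u-M)*K^2)^2 ≤ (B*(A-M)^2)^2 := by linarith [t2, t3, t4]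
  have hx : (u-A)*(u-M)*K^2 ≤ 0 := by nlinarith [hb1, sq_nonneg K]
  have hy : (0:ℝ) ≤ -B*(A-M)^2 := by nlinarith [hB, sq_nonneg (A-M)]
  have habs : -((u-A)*(u-M))*K^2 ≤ -B*(A-M)^2 := by nlinarith [hprod2, hx, hy]
  have heq : -(K*v + B)*K^2 = v^2*K^2 - ((u-A)*(u-M))*K^2 := by
    linear_combination (-(K^2))*e1
  exact ⟨by linarith [hv2K, habs, heq.le, heq.ge], hup⟩

set_option maxHeartbeats 1600000 in
theorem stmt_7 (ρ vt vt' γ d c₂ θ : ℝ) (hρ : 0 < ρ) (hv : 0 < vt)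
    (hγ : 0 < γ) (hd : 0 < d) (hc₂ : 0 < c₂) (hvt' : vt' < 0)
    (hθ : Real.sin θ ≠ 0) (lam : ℝ → ℂ)
    (hlam : ∀ ξ : ℝ, 0 < ξ →
      ((!![(vt' * Real.cos θ : ℂ), (-vt * Real.sin θ : ℂ);
           (-d * (vt' / ρ) * Real.sin θ : ℂ),
           -Complex.I * γ * ξ + (c₂ * (vt / ρ) * Real.cos θ : ℂ)] :
          Matrix (Fin 2) (Fin 2) ℂ)
        - lam ξ • (1 : Matrix (Fin 2) (Fin 2) ℂ)).det = 0)
    (him : ∀ ξ : ℝ, 0 < ξ → 0 < (lam ξ).im) :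
    Tendsto (fun ξ : ℝ => ξ * (lam ξ).im) atTop
      (nhds (-(d * vt * vt' * Real.sin θ ^ 2) / (γ * ρ))) ∧
    0 < -(d * vt * vt' * Real.sin θ ^ 2) / (γ * ρ) := by
  have hs2 : 0 < Real.sin θ ^ 2 := pow_two_pos_of_ne_zero hθ
  have hBneg : d * vt * (vt' / ρ) * Real.sin θ ^ 2 < 0 := by
    have h1 : vt' / ρ < 0 := div_neg_of_neg_of_pos hvt' hρ
    have h2 : 0 < d * vt := mul_pos hd hv
    nlinarith [mul_pos h2 hs2]
  have hpos : 0 < -(d * vt * vt' * Real.sin θ ^ 2) / (γ * ρ) := by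
    apply div_pos
    · nlinarith [mul_pos (mul_pos (mul_pos hd hv) (neg_pos.2 hvt')) hs2]
    · positivity
  refine ⟨?_, hpos⟩
  have hLγ : (-(d * vt * vt' * Real.sin θ ^ 2) / (γ * ρ)) * γ
      = -(d * vt * (vt' / ρ) * Real.sin θ ^ 2) := by
    field_simp
  obtain ⟨C, hC0, hest⟩ : ∃ C : ℝ, 0 ≤ C ∧ ∀ ξ : ℝ, 1 ≤ ξ →
      |ξ * (lam ξ).im - (-(d * vt * vt' * Real.sin θ ^ 2) / (γ * ρ))| ≤ C / ξ := by
    refine ⟨((d*vt*(vt'/ρ)*Real.sin θ^2)^2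
        - (d*vt*(vt'/ρ)*Real.sin θ^2)*(vt'*Real.cos θ - c₂*(vt/ρ)*Real.cos θ)^2)/γ^3,
      ?_, ?_⟩
    · apply div_nonneg _ (by positivity)
      nlinarith [sq_nonneg (d*vt*(vt'/ρ)*Real.sin θ^2), hBneg,
        sq_nonneg (vt'*Real.cos θ - c₂*(vt/ρ)*Real.cos θ)]
    · intro ξ hξ1
      have hξ0 : (0:ℝ) < ξ := by linarith
      have hv0 := him ξ hξ0
      have h := hlam ξ hξ0
      simp [Matrix.det_fin_two, Matrix.sub_apply, Matrix.smul_apply, Matrix.one_apply] at h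
      rw [Complex.ext_iff] at h
      simp [Complex.cos_ofReal_re, Complex.sin_ofReal_re] at h
      obtain ⟨h1, h2⟩ := h
      have e1 : (lam ξ).im^2 + (γ*ξ)*(lam ξ).im =
          ((lam ξ).re - vt'*Real.cos θ)*((lam ξ).re - c₂*(vt/ρ)*Real.cos θ)
            - d*vt*(vt'/ρ)*Real.sin θ^2 := by
        linear_combination -h1
      have e2 : (vt'*Real.cos θ - (lam ξ).re)*(γ*ξ) =
          (lam ξ).im*(2*(lam ξ).re - vt'*Real.cos θ - c₂*(vt/ρ)*Real.cos θ) := by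
        linear_combination -h2
      obtain ⟨m1, m2⟩ := aux7 (vt'*Real.cos θ) (c₂*(vt/ρ)*Real.cos θ)
        (d*vt*(vt'/ρ)*Real.sin θ^2) (γ*ξ) (lam ξ).re (lam ξ).im
        (mul_pos hγ hξ0) hv0 hBneg e1 e2
      have hden : (0:ℝ) < γ^3*ξ := by positivity
      rw [div_div, abs_le]
      constructor
      · rw [neg_le, neg_sub, le_div_iff₀ hden]
        have hid : (-(d * vt * vt' * Real.sin θ ^ 2) / (γ * ρ) - ξ*(lam ξ).im) * (γ^3*ξ)
            = -(γ*ξ*(lam ξ).im + d*vt*(vt'/ρ)*Real.sin θ^2) * (γ^2*ξ) := by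
          linear_combination (γ^2*ξ) * hLγ
        rw [hid]
        have t : (0:ℝ) ≤ -(γ*ξ*(lam ξ).im + d*vt*(vt'/ρ)*Real.sin θ^2)
            * (γ^2*(ξ^2-ξ)) := by
          apply mul_nonneg (by linarith)
          apply mul_nonneg (sq_nonneg γ)
          nlinarith [hξ1, hξ0]
        nlinarith [m1, t]
      · rw [le_div_iff₀ hden]
        have hid : (ξ*(lam ξ).im - (-(d * vt * vt' * Real.sin θ ^ 2) / (γ * ρ))) * (γ^3*ξ)
            = (γ*ξ*(lam ξ).im + d*vt*(vt'/ρ)*Real.sin θ^2) * (γ^2*ξ) := by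
          linear_combination (-(γ^2*ξ)) * hLγ
        rw [hid]
        have t : (γ*ξ*(lam ξ).im + d*vt*(vt'/ρ)*Real.sin θ^2) * (γ^2*ξ) ≤ 0 := by
          apply mul_nonpos_of_nonpos_of_nonneg m2 (by positivity)
        have hCnum : (0:ℝ) ≤ (d*vt*(vt'/ρ)*Real.sin θ^2)^2
            - (d*vt*(vt'/ρ)*Real.sin θ^2)*(vt'*Real.cos θ - c₂*(vt/ρ)*Real.cos θ)^2 := by
          nlinarith [sq_nonneg (d*vt*(vt'/ρ)*Real.sin θ^2), hBneg,
            sq_nonneg (vt'*Real.cos θ - c₂*(vt/ρ)*Real.cos θ)]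
        linarith [t, hCnum]
  have h0 : Tendsto (fun ξ : ℝ => C / ξ) atTop (nhds 0) :=
    tendsto_const_nhds.div_atTop tendsto_id
  have hev : ∀ᶠ ξ : ℝ in atTop,
      ‖ξ * (lam ξ).im - (-(d * vt * vt' * Real.sin θ ^ 2) / (γ * ρ))‖ ≤ C / ξ :=
    eventually_atTop.2 ⟨1, fun ξ hξ => by simpa [Real.norm_eq_abs] using hest ξ hξ⟩
  exact tendsto_sub_nhds_zero_iff.1 (squeeze_zero_norm' hev h0)
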